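/- (Existence and uniqueness of the radial shift) Let K be a cone in a normed linear space X such that the norm preserves the order relation ≺ over K, let h ∈ K \ {0} and r > 0. Then for each x ∈ K with ‖x‖ ≤ r there exists a unique t_x ∈ [0, +∞) such that ‖x + t_x h‖ = r; moreover t_x = 0 when ‖x‖ = r. -/

import Mathlib

open Set

/-- A cone in a normed linear space: a nonempty closed convex set, invariant under
multiplication by nonnegative scalars, with `K ∩ (-K) = {0}`. -/
def IsCone {X : Type*} [NormedAddCommGroup X] [NormedSpace ℝ X] (K : Set X) : Prop :=
  K.Nonempty ∧ IsClosed K ∧ Convex ℝ K ∧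
    (∀ u ∈ K, ∀ c : ℝ, 0 ≤ c → c • u ∈ K) ∧ K ∩ (-K) = {0}

theorem radial_shift_exists_unique
    {X : Type*} [NormedAddCommGroup X] [NormedSpace ℝ X]
    {K : Set X} (hK : IsCone K)
    (hpres : ∀ x ∈ K, ∀ y ∈ K, y - x ∈ K \ {0} → ‖x‖ < ‖y‖)
    {h : X} (hh : h ∈ K) (hh0 : h ≠ 0) {r : ℝ} (hr : 0 < r) :
    ∀ x ∈ K, ‖x‖ ≤ r →
      (∃! t : ℝ, 0 ≤ t ∧ ‖x + t • h‖ = r) ∧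
      (‖x‖ = r → ∀ t : ℝ, 0 ≤ t → ‖x + t • h‖ = r → t = 0) := by
  obtain ⟨-, -, hconv, hscale, -⟩ := hK
  -- K is closed under addition
  have hadd : ∀ u ∈ K, ∀ v ∈ K, u + v ∈ K := by
    intro u hu v hv
    have hmid : (1/2 : ℝ) • u + (1/2 : ℝ) • v ∈ K :=
      hconv hu hv (by norm_num) (by norm_num) (by norm_num)
    have := hscale _ hmid 2 (by norm_num)
    simpa [smul_smul, smul_add] using this
  intro x hx hxr
  have hmemK : ∀ t : ℝ, 0 ≤ t → x + t • h ∈ K := fun t ht =>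
    hadd x hx _ (hscale h hh t ht)
  -- strict monotonicity on [0, ∞)
  have hmono : ∀ s t : ℝ, 0 ≤ s → s < t → ‖x + s • h‖ < ‖x + t • h‖ := by
    intro s t hs hst
    have ht : (0:ℝ) ≤ t := le_of_lt (lt_of_le_of_lt hs hst)
    refine hpres _ (hmemK s hs) _ (hmemK t ht) ⟨?_, ?_⟩
    · have : (x + t • h) - (x + s • h) = (t - s) • h := by
        rw [sub_smul]; abel
      rw [this]
      exact hscale h hh _ (by linarith)
    · simp only [mem_singleton_iff]
      intro hc
      have : (t - s) • h = 0 := by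
        rw [← hc, sub_smul]; abel
      rcases smul_eq_zero.mp this with h1 | h1
      · linarith [sub_ne_zero_of_ne (ne_of_gt hst), h1]
      · exact hh0 h1
  have hcont : Continuous fun t : ℝ => ‖x + t • h‖ := by
    continuity
  have hhpos : 0 < ‖h‖ := norm_pos_iff.mpr hh0
  -- existence via IVT
  set T : ℝ := (r + ‖x‖) / ‖h‖ with hT
  have hT0 : 0 ≤ T := div_nonneg (by positivity) hhpos.le
  have hfT : r ≤ ‖x + T • h‖ := by
    have h2 : ‖T • h‖ = T * ‖h‖ := by
      rw [norm_smul, Real.norm_of_nonneg hT0]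
    have h3 : T * ‖h‖ = r + ‖x‖ := by
      rw [hT, div_mul_cancel₀ _ hhpos.ne']
    have h5 : ‖T • h‖ ≤ ‖x + T • h‖ + ‖x‖ := by
      calc ‖T • h‖ = ‖(x + T • h) - x‖ := by rw [add_sub_cancel_left]
      _ ≤ ‖x + T • h‖ + ‖x‖ := norm_sub_le _ _
    rw [h2, h3] at h5
    linarith
  have hex : ∃ t ∈ Icc (0:ℝ) T, ‖x + t • h‖ = r := by
    have : r ∈ Icc ‖x + (0:ℝ) • h‖ ‖x + T • h‖ := by
      constructor
      · simpa using hxr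
      · exact hfT
    obtain ⟨t, ht, hval⟩ := intermediate_value_Icc hT0 (hcont.continuousOn) this
    exact ⟨t, ht, hval⟩
  obtain ⟨t₀, ⟨ht₀0, -⟩, hval⟩ := hex
  have uniq : ∀ t : ℝ, 0 ≤ t ∧ ‖x + t • h‖ = r → t = t₀ := by
    intro t ⟨ht, hvt⟩
    by_contra hne
    rcases lt_or_gt_of_ne hne with hlt | hgt
    · have := hmono t t₀ ht hlt
      rw [hvt, hval] at this; exact lt_irrefl r this
    · have := hmono t₀ t ht₀0 hgt
      rw [hvt, hval] at this; exact lt_irrefl r this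
  refine ⟨⟨t₀, ⟨ht₀0, hval⟩, uniq⟩, ?_⟩
  intro hxeq t ht hvt
  by_contra hne
  have htpos : 0 < t := lt_of_le_of_ne ht (Ne.symm hne)
  have := hmono 0 t le_rfl htpos
  simp only [zero_smul, add_zero] at this
  rw [hxeq, hvt] at this
  exact lt_irrefl r this
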